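/- Suppose A N = N. With C, T_λ, T_μ, T, α, λ, S, η and the Jacobi operator R_X Y := g(X,X)Y - g(X,Y)X + 3g(J X,Y)J X + g(A X,X)A Y - g(A X,Y)A X + g(J A X, X)J A Y + g(A J X, Y)J A X + g(S X,X)S Y - g(S X,Y)S X as in the type-B tube model, the following block formulas hold. For X ∈ T_λ: R_X(ξ) = αλ·g(X,X)·ξ, R_X(Y) = (λ² + 2)·(g(X,X)Y - g(X,Y)X) for Y ∈ T_λ, and R_X(Y) = 2 g(J X, Y)·J X for Y ∈ T_μ. For X ∈ T_μ: R_X(ξ) = 2 g(X,X)·ξ, R_X(Y) = 2 g(J X, Y)·J X for Y ∈ T_λ, and R_X(Y) = 2·(g(X,X)Y - g(X,Y)X) for Y ∈ T_μ. -/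

import Mathlib

noncomputable section

variable {V : Type*}

/-- The real inner product `g(x,y) = Re⟨x,y⟩` induced by the Hermitian inner product. -/
def g [NormedAddCommGroup V] [InnerProductSpace ℂ V] (x y : V) : ℝ := (inner ℂ x y : ℂ).re

/-- The Jacobi operator `R_X` of the type-B tube, obtained from the Gauss equation. -/
def RXop [NormedAddCommGroup V] [InnerProductSpace ℂ V]
    (A S : V →ₗ[ℝ] V) (X Y : V) : V :=
  g X X • Y - g X Y • X + (3 * g (Complex.I • X) Y) • (Complex.I • X)
    + g (A X) X • A Y - g (A X) Y • A X
    + g (Complex.I • A X) X • (Complex.I • A Y)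
    + g (A (Complex.I • X)) Y • (Complex.I • A X)
    + g (S X) X • S Y - g (S X) Y • S X

section helpers
variable [NormedAddCommGroup V] [InnerProductSpace ℂ V]

lemma g_symm (x y : V) : g x y = g y x := inner_re_symm (𝕜 := ℂ) x y

lemma g_neg_left (x y : V) : g (-x) y = -g x y := by unfold g; simp [inner_neg_left]
lemma g_neg_right (x y : V) : g x (-y) = -g x y := by unfold g; simp [inner_neg_right]
lemma g_smul_left (r : ℝ) (x y : V) : g (r • x) y = r * g x y := by
  unfold g
  rw [RCLike.real_smul_eq_coe_smul (K := ℂ), inner_smul_left]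
  simp
lemma g_smul_right (r : ℝ) (x y : V) : g x (r • y) = r * g x y := by
  unfold g
  rw [RCLike.real_smul_eq_coe_smul (K := ℂ), inner_smul_right]
  simp
lemma gII (x y : V) : g (Complex.I • x) (Complex.I • y) = g x y := by
  unfold g; rw [inner_smul_left, inner_smul_right]
  simp [Complex.conj_I]
lemma gIx (x : V) : g (Complex.I • x) x = 0 := by
  unfold g; rw [inner_smul_left]
  have h : (inner ℂ x x : ℂ).im = 0 := Complex.conj_eq_iff_im.mp (inner_conj_symm x x)
  simp [Complex.conj_I, Complex.mul_re, h]
  exact_mod_cast Complex.ofReal_im (‖x‖ ^ 2)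
lemma g_zero_left (x : V) : g 0 x = 0 := by unfold g; simp
lemma g_zero_right (x : V) : g x 0 = 0 := by unfold g; simp
lemma gxI (x : V) : g x (Complex.I • x) = 0 := by rw [g_symm]; exact gIx x
end helpers

/-- Block formulas for the Jacobi operator `R_X` of the type-B tube model: for
`X ∈ T_λ`: `R_X(ξ) = αλ g(X,X)·ξ`, `R_X(Y) = (λ²+2)(g(X,X)Y - g(X,Y)X)` on `T_λ`, and
`R_X(Y) = 2g(JX,Y)·JX` on `T_μ`; for `X ∈ T_μ`: `R_X(ξ) = 2g(X,X)·ξ`,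
`R_X(Y) = 2g(JX,Y)·JX` on `T_λ`, and `R_X(Y) = 2(g(X,X)Y - g(X,Y)X)` on `T_μ`. -/
theorem stmt_19 [NormedAddCommGroup V] [InnerProductSpace ℂ V]
    (A : V →ₗ[ℝ] V)
    (hA_invol : ∀ x, A (A x) = x)
    (hA_antiJ : ∀ x, A (Complex.I • x) = -(Complex.I • A x))
    (hA_herm : ∀ x y, (inner ℂ (A x) (A y) : ℂ) = inner ℂ y x)
    (N : V) (hN : ‖N‖ = 1)
    (ξ : V) (hξ : ξ = -(Complex.I • N))
    (hAN : A N = N)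
    (α lam : ℝ) (S : V →ₗ[ℝ] V)
    (hS_tan : ∀ Y : V, g Y N = 0 → g (S Y) N = 0)
    (hSξ : S ξ = α • ξ)
    (hSlam : ∀ X : V, g X N = 0 → g X ξ = 0 → A X = X → S X = lam • X)
    (hSmu : ∀ X : V, g X N = 0 → g X ξ = 0 → A X = -X → S X = 0) :
    (∀ X : V, g X N = 0 → g X ξ = 0 → A X = X →
      RXop A S X ξ = (α * lam * g X X) • ξ ∧
      (∀ Y : V, g Y N = 0 → g Y ξ = 0 → A Y = Y →
        RXop A S X Y = (lam ^ 2 + 2) • (g X X • Y - g X Y • X)) ∧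
      (∀ Y : V, g Y N = 0 → g Y ξ = 0 → A Y = -Y →
        RXop A S X Y = (2 * g (Complex.I • X) Y) • (Complex.I • X))) ∧
    (∀ X : V, g X N = 0 → g X ξ = 0 → A X = -X →
      RXop A S X ξ = (2 * g X X) • ξ ∧
      (∀ Y : V, g Y N = 0 → g Y ξ = 0 → A Y = Y →
        RXop A S X Y = (2 * g (Complex.I • X) Y) • (Complex.I • X)) ∧
      (∀ Y : V, g Y N = 0 → g Y ξ = 0 → A Y = -Y →
        RXop A S X Y = (2 : ℝ) • (g X X • Y - g X Y • X))) := by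
  have gA : ∀ x y : V, g (A x) (A y) = g x y := fun x y => by
    unfold g; rw [hA_herm]; exact inner_re_symm (𝕜 := ℂ) y x
  have hAξ : A ξ = -ξ := by rw [hξ, map_neg, hA_antiJ, hAN, neg_neg]
  have gJξ : ∀ x : V, g x N = 0 → g (Complex.I • x) ξ = 0 := fun x hx => by
    rw [hξ, g_neg_right, gII, hx, neg_zero]
  constructor
  · intro X hX1 hX2 hX3
    have hSX : S X = lam • X := hSlam X hX1 hX2 hX3
    have hAJX : A (Complex.I • X) = -(Complex.I • X) := by rw [hA_antiJ, hX3]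
    refine ⟨?_, ?_, ?_⟩
    · simp only [RXop, hX3, hAξ, hSX, hSξ, hAJX]
      simp only [g_neg_left, g_smul_left, hX2, gJξ X hX1, gIx, gxI]
      module
    · intro Y hY1 hY2 hY3
      have hSY : S Y = lam • Y := hSlam Y hY1 hY2 hY3
      have gIXY : g (Complex.I • X) Y = 0 := by
        have h := gA (Complex.I • X) Y
        rw [hAJX, hY3, g_neg_left] at h; linarith
      simp only [RXop, hX3, hY3, hSX, hSY, hAJX]
      simp only [g_neg_left, g_smul_left, gIXY, gIx]
      module
    · intro Y hY1 hY2 hY3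
      have hSY : S Y = 0 := hSmu Y hY1 hY2 hY3
      have gXY : g X Y = 0 := by
        have h := gA X Y
        rw [hX3, hY3, g_neg_right] at h; linarith
      simp only [RXop, hX3, hY3, hSX, hSY, hAJX]
      simp only [g_neg_left, g_neg_right, g_smul_left, gXY, gIx, smul_neg]
      module
  · intro X hX1 hX2 hX3
    have hSX : S X = 0 := hSmu X hX1 hX2 hX3
    have hAJX : A (Complex.I • X) = Complex.I • X := by
      rw [hA_antiJ, hX3, smul_neg, neg_neg]
    refine ⟨?_, ?_, ?_⟩
    · simp only [RXop, hX3, hAξ, hSX, hAJX]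
      simp only [g_neg_left, g_neg_right, hX2, gJξ X hX1, gIx, smul_neg, neg_neg, g_zero_left, g_zero_right]
      module
    · intro Y hY1 hY2 hY3
      have hSY : S Y = lam • Y := hSlam Y hY1 hY2 hY3
      have gXY : g X Y = 0 := by
        have h := gA X Y
        rw [hX3, hY3, g_neg_left] at h; linarith
      simp only [RXop, hX3, hY3, hSX, hSY, hAJX]
      simp only [g_neg_left, g_neg_right, g_smul_left, gXY, gIx, smul_neg, neg_neg, g_zero_left, g_zero_right]
      module
    · intro Y hY1 hY2 hY3
      have hSY : S Y = 0 := hSmu Y hY1 hY2 hY3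
      have gIXY : g (Complex.I • X) Y = 0 := by
        have h := gA (Complex.I • X) Y
        rw [hAJX, hY3, g_neg_right] at h; linarith
      simp only [RXop, hX3, hY3, hSX, hSY, hAJX]
      simp only [g_neg_left, g_neg_right, gIXY, gIx, smul_neg, neg_neg, g_zero_left, g_zero_right]
      module
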